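/- Let G be a group with finite-index subgroups H₁,…,H_s and virtual endomorphisms f_i : H_i → G whose common core is trivial. Let G^(ω) be the restricted direct product of countably many copies of G. For 1 ≤ i ≤ s let L_i = {(g₁,g₂,g₃,…) ∈ G^(ω) : g₁ ∈ H_i} and define f̄_i : L_i → G^(ω) by f̄_i(h,g₂,g₃,…) = (f_i(h),g₂,g₃,…); let f̄_{s+1} : G^(ω) → G^(ω) be the shift (g₁,g₂,…) ↦ (g₂,g₃,…). Then the only subgroup L ≤ ∩_{i=1}^{s+1} L_i normal in G^(ω) with f̄_i(L) ⊆ L for all i = 1,…,s+1 is the trivial subgroup. -/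
import Mathlib


/-- Let `G` be a group with finite-index subgroups `H i` and virtual endomorphisms
`f i : H i →* G` whose common core is trivial.  In the restricted direct product
`G^(ω)` (finitely supported sequences in `ℕ → G`), consider a subgroup `L` consisting
of finitely supported sequences whose first entry lies in every `H i`, which is normal
in `G^(ω)`, invariant under each `f̄ i` (apply `f i` to the first coordinate) and
under the shift `f̄_{s+1}`.  Then `L` is trivial. -/
theorem stmt3 {G : Type*} [Group G] {s : ℕ}
    (H : Fin s → Subgroup G) (hfin : ∀ i, (H i).FiniteIndex)
    (f : ∀ i, (H i) →* G)
    (hcore : ∀ K : Subgroup G, K.Normal → (∀ i, K ≤ H i) →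
      (∀ (i : Fin s) (x : G) (hx : x ∈ H i), x ∈ K → f i ⟨x, hx⟩ ∈ K) → K = ⊥)
    (L : Subgroup (ℕ → G))
    (hLfin : ∀ g ∈ L, (Function.mulSupport g).Finite)
    (hLH : ∀ g ∈ L, ∀ i, g 0 ∈ H i)
    (hLnorm : ∀ c : ℕ → G, (Function.mulSupport c).Finite → ∀ g ∈ L, c * g * c⁻¹ ∈ L)
    (hshift : ∀ g ∈ L, (fun n => g (n + 1)) ∈ L)
    (hLf : ∀ (i : Fin s) (g : ℕ → G) (hg : g ∈ L),
      Function.update g 0 (f i ⟨g 0, hLH g hg i⟩) ∈ L) :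
    L = ⊥ := by
  -- K is the projection of L to coordinate 0
  have hK : Subgroup.map (Pi.evalMonoidHom (fun _ : ℕ => G) 0) L = ⊥ := by
    apply hcore
    · constructor
      rintro x ⟨g, hg, rfl⟩ c
      have hfin' : (Function.mulSupport (Function.update (1 : ℕ → G) 0 c)).Finite := by
        apply (Set.finite_singleton 0).subset
        intro n hn
        simp only [Function.mem_mulSupport] at hn
        by_contra h
        exact hn (by simp [Function.update_of_ne h])
      refine ⟨Function.update (1 : ℕ → G) 0 c * g *
        (Function.update (1 : ℕ → G) 0 c)⁻¹, hLnorm _ hfin' g hg, ?_⟩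
      simp [Pi.evalMonoidHom]
    · rintro i x ⟨g, hg, rfl⟩
      exact hLH g hg i
    · rintro i x hx ⟨g, hg, rfl⟩
      exact ⟨_, hLf i g hg, by simp [Pi.evalMonoidHom]⟩
  have h0 : ∀ g ∈ L, g 0 = 1 := by
    intro g hg
    have : (Pi.evalMonoidHom (fun _ : ℕ => G) 0) g ∈
        Subgroup.map (Pi.evalMonoidHom (fun _ : ℕ => G) 0) L := ⟨g, hg, rfl⟩
    rw [hK] at this
    simpa using this
  have hall : ∀ n, ∀ g ∈ L, g n = 1 := by
    intro n
    induction n with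
    | zero => exact h0
    | succ n ih => intro g hg; exact ih _ (hshift g hg)
  rw [Subgroup.eq_bot_iff_forall]
  intro g hg
  funext n
  exact hall n g hg
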